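/- Let E and F be real vector spaces, let (F_λ)_{λ∈Λ} be a family of Hausdorff topological real vector spaces, let f : E → F be linear and let g_λ : F → F_λ be a family of linear maps which is point separating on F (for every y ∈ F with y ≠ 0 there is some λ with g_λ(y) ≠ 0). Let B ⊆ E be a balanced convex set such that: (a) for every x in the ℝ-linear span of B, gauge B x = 0 implies x = 0; (b) every sequence (x_n) in span_ℝ B which is Cauchy for gauge B (i.e. for every ε > 0 there is N with gauge B (x_m − x_n) < ε for all m, n ≥ N) has a limit x ∈ span_ℝ B with gauge B (x_n − x) → 0. Assume moreover that for every λ the set g_λ(f(B)) is von Neumann bounded in F_λ. Then the image set f(B) has the same two properties in F: (a') for every y ∈ span_ℝ (f(B)), gauge (f(B)) y = 0 implies y = 0, and (b') every sequence in span_ℝ (f(B)) which is Cauchy for gauge (f(B)) converges, with respect to gauge (f(B)), to an element of span_ℝ (f(B)). In other words, if (E_B, p_B) is a Banach space and each (g_λ ∘ f)(B) is bounded, then (F_{f(B)}, p_{f(B)}) is a Banach space. -/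

import Mathlib

open Filter Topology
open Pointwise

section Aux
variable {E : Type*} [AddCommGroup E] [Module ℝ E] {C : Set E}

lemma auxAddMem (hconv : Convex ℝ C) {p q : ℝ} (hp : 0 ≤ p) (hq : 0 ≤ q)
    {a b : E} (ha : a ∈ p • C) (hb : b ∈ q • C) : a + b ∈ (p + q) • C := by
  rw [hconv.add_smul hp hq]
  exact Set.add_mem_add ha hb

lemma auxAbsorb (hbal : Balanced ℝ C) (hconv : Convex ℝ C) (h0 : (0 : E) ∈ C) :
    ∀ x ∈ Submodule.span ℝ C, ∃ t > (0 : ℝ), x ∈ t • C := by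
  intro x hx
  induction hx using Submodule.span_induction with
  | mem x hx => exact ⟨1, one_pos, ⟨x, hx, one_smul ℝ x⟩⟩
  | zero => exact ⟨1, one_pos, ⟨0, h0, smul_zero 1⟩⟩
  | add a b _ _ iha ihb =>
      obtain ⟨s, hs, has⟩ := iha
      obtain ⟨t, ht, hbt⟩ := ihb
      exact ⟨s + t, by positivity, auxAddMem hconv hs.le ht.le has hbt⟩
  | smul c a _ ih =>
      obtain ⟨t, ht, hat⟩ := ih
      rcases eq_or_ne c 0 with rfl | hc
      · exact ⟨1, one_pos, by rw [zero_smul]; exact ⟨0, h0, smul_zero 1⟩⟩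
      · refine ⟨|c| * t, by positivity, ?_⟩
        have h1 : c • a ∈ (c * t) • C := by
          rw [mul_smul]
          exact Set.smul_mem_smul_set hat
        refine hbal.smul_mono ?_ h1
        simp [abs_mul, abs_of_pos ht, abs_abs]

lemma auxMemOfGaugeLt (hbal : Balanced ℝ C) {x : E} (hx : ∃ t > (0 : ℝ), x ∈ t • C)
    {ε : ℝ} (hε : 0 < ε) (hg : gauge C x < ε) : x ∈ ε • C := by
  obtain ⟨t, ht, hxt⟩ := hx
  have hne : {r : ℝ | 0 < r ∧ x ∈ r • C}.Nonempty := ⟨t, ht, hxt⟩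
  obtain ⟨r, ⟨hr, hxr⟩, hrε⟩ := exists_lt_of_csInf_lt hne hg
  have hle : ‖r‖ ≤ ‖ε‖ := by
    rw [Real.norm_eq_abs, Real.norm_eq_abs, abs_of_pos hr, abs_of_pos hε]
    exact hrε.le
  exact hbal.smul_mono hle hxr

lemma auxSumMem (hconv : Convex ℝ C) (h0 : (0 : E) ∈ C) (s : Finset ℕ)
    (c : ℕ → ℝ) (hc : ∀ j, 0 ≤ c j) (x : ℕ → E) (hx : ∀ j, x j ∈ c j • C) :
    ∑ j ∈ s, x j ∈ (∑ j ∈ s, c j) • C := by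
  induction s using Finset.cons_induction with
  | empty => simpa using ⟨0, h0, smul_zero 0⟩
  | cons j s hj ih =>
      rw [Finset.sum_cons, Finset.sum_cons]
      exact auxAddMem hconv (hc j) (Finset.sum_nonneg fun i _ => hc i) (hx j) ih

end Aux

/-- Lemma B.4 of the paper: let `f : E → F` be linear, `g λ : F → F_λ` a point
separating family of linear maps into Hausdorff topological vector spaces, and
`B ⊆ E` a balanced convex set such that `(E_B, p_B)` is a Banach space (the
Minkowski functional `gauge B` is a norm on `span ℝ B` for which it is
complete).  If every set `(g λ ∘ f)(B)` is von Neumann bounded, then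
`(F_{f(B)}, p_{f(B)})` is a Banach space as well. -/
theorem banach_of_image_gauge
    {E F : Type*} {Λ : Type*} {Fl : Λ → Type*}
    [AddCommGroup E] [Module ℝ E] [AddCommGroup F] [Module ℝ F]
    [∀ l, AddCommGroup (Fl l)] [∀ l, Module ℝ (Fl l)]
    [∀ l, TopologicalSpace (Fl l)] [∀ l, IsTopologicalAddGroup (Fl l)]
    [∀ l, ContinuousSMul ℝ (Fl l)] [∀ l, T2Space (Fl l)]
    (f : E →ₗ[ℝ] F) (g : ∀ l, F →ₗ[ℝ] Fl l)
    (hsep : ∀ y : F, y ≠ 0 → ∃ l, g l y ≠ 0)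
    (B : Set E) (hbal : Balanced ℝ B) (hconv : Convex ℝ B)
    (hnorm : ∀ x ∈ Submodule.span ℝ B, gauge B x = 0 → x = 0)
    (hcomplete : ∀ u : ℕ → E, (∀ n, u n ∈ Submodule.span ℝ B) →
      (∀ ε > 0, ∃ N : ℕ, ∀ m ≥ N, ∀ n ≥ N, gauge B (u m - u n) < ε) →
      ∃ x ∈ Submodule.span ℝ B,
        Tendsto (fun n => gauge B (u n - x)) atTop (𝓝 0))
    (hbdd : ∀ l, Bornology.IsVonNBounded ℝ (g l '' (f '' B))) :
    (∀ y ∈ Submodule.span ℝ (f '' B), gauge (f '' B) y = 0 → y = 0) ∧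
      (∀ u : ℕ → F, (∀ n, u n ∈ Submodule.span ℝ (f '' B)) →
        (∀ ε > 0, ∃ N : ℕ, ∀ m ≥ N, ∀ n ≥ N, gauge (f '' B) (u m - u n) < ε) →
        ∃ y ∈ Submodule.span ℝ (f '' B),
          Tendsto (fun n => gauge (f '' B) (u n - y)) atTop (𝓝 0)) := by
  rcases Set.eq_empty_or_nonempty B with rfl | hBne
  · constructor
    · intro y hy _
      simp only [Set.image_empty, Submodule.span_empty, Submodule.mem_bot] at hy
      exact hy
    · intro u hu _
      have hu0 : ∀ n, u n = 0 := fun n => by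
        have := hu n
        simpa only [Set.image_empty, Submodule.span_empty, Submodule.mem_bot] using this
      refine ⟨0, by simp, ?_⟩
      simp only [hu0, sub_self, gauge_zero]
      exact tendsto_const_nhds
  have h0B : (0 : E) ∈ B := by
    obtain ⟨b, hb⟩ := hBne
    have := hbal 0 (by simp) (Set.smul_mem_smul_set hb)
    simpa using this
  have hCbal : Balanced ℝ (f '' B) := by
    intro a ha
    rw [← image_smul_set]
    exact Set.image_mono (f := f) (hbal a ha)
  have hCconv : Convex ℝ (f '' B) := hconv.linear_image f
  have h0C : (0 : F) ∈ f '' B := ⟨0, h0B, map_zero f⟩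
  have hspan : Submodule.span ℝ (f '' B) = (Submodule.span ℝ B).map f :=
    Submodule.span_image f
  have habsB := auxAbsorb hbal hconv h0B
  have habsC := auxAbsorb hCbal hCconv h0C
  have hmemf : ∀ {t : ℝ} {x : E}, x ∈ t • B → f x ∈ t • (f '' B) := by
    intro t x hx
    rw [← image_smul_set]
    exact Set.mem_image_of_mem f hx
  have hsymmB : ∀ x ∈ B, -x ∈ B := by
    intro x hx
    have := hbal (-1) (by norm_num) (Set.smul_mem_smul_set hx)
    simpa using this
  constructor
  · -- gauge is a norm on the span of the image
    intro y hy hg0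
    by_contra hy0
    obtain ⟨l, hl⟩ := hsep y hy0
    have key : ∀ V ∈ 𝓝 (0 : Fl l), g l y ∈ V := by
      intro V hV
      obtain ⟨W, ⟨hWn, hWbal⟩, hWV⟩ := (nhds_basis_balanced ℝ (Fl l)).mem_iff.1 hV
      obtain ⟨r, hr, hrW⟩ := ((hbdd l) hWn).exists_pos
      have hc0 : (0:ℝ) < max r 1 := lt_of_lt_of_le one_pos (le_max_right r 1)
      have hsub : g l '' (f '' B) ⊆ (max r 1) • W := by
        refine hrW (max r 1) ?_
        rw [Real.norm_eq_abs, abs_of_pos hc0]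
        exact le_max_left r 1
      have hyc : y ∈ (max r 1)⁻¹ • (f '' B) :=
        auxMemOfGaugeLt hCbal (habsC y hy) (by positivity) (by rw [hg0]; positivity)
      have hmem1 : g l y ∈ (max r 1)⁻¹ • (g l '' (f '' B)) := by
        obtain ⟨z, hz, rfl⟩ := hyc
        rw [map_smul]
        exact Set.smul_mem_smul_set (Set.mem_image_of_mem _ hz)
      have h2 : g l y ∈ (max r 1)⁻¹ • ((max r 1) • W) := Set.smul_set_mono hsub hmem1
      rw [smul_smul, inv_mul_cancel₀ hc0.ne', one_smul] at h2
      exact hWV h2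
    have hmemc : g l y ∈ ({g l y}ᶜ : Set (Fl l)) := by
      refine key _ (IsOpen.mem_nhds isOpen_compl_singleton ?_)
      simpa using (Ne.symm hl)
    exact hmemc rfl
  · -- completeness
    intro u hu hcau
    choose M hM using fun k : ℕ => hcau ((1/2 : ℝ) ^ k) (by positivity)
    set φ : ℕ → ℕ := fun k => k + (Finset.range (k + 1)).sup M with hφdef
    have hφM : ∀ k, M k ≤ φ k := fun k =>
      le_trans (Finset.le_sup (Finset.self_mem_range_succ k)) (Nat.le_add_left _ _)
    have hφmono : Monotone φ := fun a b hab =>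
      add_le_add hab (Finset.sup_mono (Finset.range_subset_range.2 (by omega)))
    have hφk : ∀ k, k ≤ φ k := fun k => Nat.le_add_right _ _
    have hd : ∀ k, gauge (f '' B) (u (φ (k + 1)) - u (φ k)) < (1/2 : ℝ) ^ k := fun k =>
      hM k _ (le_trans (hφM k) (hφmono (Nat.le_succ k))) _ (hφM k)
    have hw : ∀ k : ℕ, ∃ w : E, w ∈ ((1/2 : ℝ) ^ k) • B ∧
        f w = u (φ (k + 1)) - u (φ k) := by
      intro k
      have hmem : u (φ (k + 1)) - u (φ k) ∈ ((1/2 : ℝ) ^ k) • (f '' B) :=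
        auxMemOfGaugeLt hCbal (habsC _ (Submodule.sub_mem _ (hu _) (hu _)))
          (by positivity) (hd k)
      obtain ⟨z, hz, hze⟩ := hmem
      obtain ⟨b, hb, rfl⟩ := hz
      exact ⟨(1/2 : ℝ) ^ k • b, Set.smul_mem_smul_set hb, by rw [map_smul]; exact hze⟩
    choose w hwB hwf using hw
    obtain ⟨v0, hv0span, hv0f⟩ : ∃ v0 ∈ Submodule.span ℝ B, f v0 = u (φ 0) := by
      have h := hu (φ 0)
      rw [hspan] at h
      obtain ⟨v0, h1, h2⟩ := h
      exact ⟨v0, h1, h2⟩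
    set v : ℕ → E := fun k => v0 + ∑ j ∈ Finset.range k, w j with hvdef
    have hwspan : ∀ j, w j ∈ Submodule.span ℝ B := by
      intro j
      obtain ⟨b, hb, hbe⟩ := hwB j
      rw [← hbe]
      exact Submodule.smul_mem _ _ (Submodule.subset_span hb)
    have hvspan : ∀ k, v k ∈ Submodule.span ℝ B := fun k =>
      Submodule.add_mem _ hv0span (Submodule.sum_mem _ fun j _ => hwspan j)
    have hvf : ∀ k, f (v k) = u (φ k) := by
      intro k
      have h1 : f (v k) = f v0 + ∑ j ∈ Finset.range k, (u (φ (j + 1)) - u (φ j)) := by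
        simp [hvdef, map_sum, hwf]
      rw [h1, Finset.sum_range_sub (fun j => u (φ j)) k, hv0f]
      abel
    have hvdiff : ∀ n m, n ≤ m →
        v m - v n ∈ (∑ j ∈ Finset.Ico n m, (1/2 : ℝ) ^ j) • B := by
      intro n m hnm
      have h1 : v m - v n = ∑ j ∈ Finset.Ico n m, w j := by
        rw [Finset.sum_Ico_eq_sub _ hnm]
        simp only [hvdef]
        abel
      rw [h1]
      exact auxSumMem hconv h0B _ _ (fun j => by positivity) _ hwB
    have hgeo : ∀ n m : ℕ, (∑ j ∈ Finset.Ico n m, (1/2 : ℝ) ^ j) ≤ 2 * (1/2) ^ n := by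
      intro n m
      rcases le_or_gt n m with h | h
      · rw [Finset.sum_Ico_eq_sum_range]
        have h2 : ∀ i : ℕ, (1/2 : ℝ) ^ (n + i) = (1/2) ^ n * (1/2) ^ i := fun i =>
          pow_add _ _ _
        simp_rw [h2, ← Finset.mul_sum]
        rw [mul_comm (2 : ℝ)]
        exact mul_le_mul_of_nonneg_left (sum_geometric_two_le _) (by positivity)
      · rw [Finset.Ico_eq_empty (by omega)]
        simp only [Finset.sum_empty]
        positivity
    have hvcauchy : ∀ ε > 0, ∃ N : ℕ, ∀ m ≥ N, ∀ n ≥ N, gauge B (v m - v n) < ε := by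
      intro ε hε
      obtain ⟨N, hN⟩ := exists_pow_lt_of_lt_one (show (0:ℝ) < ε / 2 by positivity)
        (show (1/2 : ℝ) < 1 by norm_num)
      refine ⟨N, ?_⟩
      have key : ∀ m n, n ≤ m → N ≤ n → gauge B (v m - v n) < ε := by
        intro m n hnm hNn
        have hsumnn : (0:ℝ) ≤ ∑ j ∈ Finset.Ico n m, (1/2 : ℝ) ^ j :=
          Finset.sum_nonneg fun j _ => by positivity
        have hb2 : v m - v n ∈ (2 * (1/2 : ℝ) ^ n) • B := by
          refine hbal.smul_mono ?_ (hvdiff n m hnm)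
          rw [Real.norm_eq_abs, Real.norm_eq_abs, abs_of_nonneg hsumnn,
            abs_of_nonneg (by positivity : (0:ℝ) ≤ 2 * (1/2 : ℝ) ^ n)]
          exact hgeo n m
        have hle : gauge B (v m - v n) ≤ 2 * (1/2 : ℝ) ^ n :=
          gauge_le_of_mem (by positivity) hb2
        have hle2 : (1/2 : ℝ) ^ n ≤ (1/2) ^ N :=
          pow_le_pow_of_le_one (by norm_num) (by norm_num) hNn
        calc gauge B (v m - v n) ≤ 2 * (1/2 : ℝ) ^ n := hle
          _ ≤ 2 * (1/2 : ℝ) ^ N := by linarith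
          _ < ε := by linarith
      intro m hm n hn
      rcases le_total n m with h | h
      · exact key m n h hn
      · have h2 := key n m h hm
        rw [show v m - v n = -(v n - v m) by abel, gauge_neg hsymmB]
        exact h2
    obtain ⟨x, hxspan, hxt⟩ := hcomplete v hvspan hvcauchy
    refine ⟨f x, by rw [hspan]; exact Submodule.mem_map_of_mem hxspan, ?_⟩
    rw [Metric.tendsto_atTop]
    intro ε hε
    obtain ⟨K, hK⟩ := Metric.tendsto_atTop.1 hxt (ε / 3) (by positivity)
    obtain ⟨N, hN⟩ := hcau (ε / 3) (by positivity)
    refine ⟨N, fun n hn => ?_⟩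
    have hφk0N : N ≤ φ (max K N) := le_trans (le_max_right K N) (hφk _)
    have hg1 : gauge (f '' B) (u n - u (φ (max K N))) < ε / 3 := hN n hn _ hφk0N
    have hm1 : u n - u (φ (max K N)) ∈ (ε / 3) • (f '' B) :=
      auxMemOfGaugeLt hCbal (habsC _ (Submodule.sub_mem _ (hu n) (hu _)))
        (by positivity) hg1
    have hgK : gauge B (v (max K N) - x) < ε / 3 := by
      have h := hK (max K N) (le_max_left K N)
      rwa [Real.dist_eq, sub_zero, abs_of_nonneg (gauge_nonneg _)] at h
    have hm2' : v (max K N) - x ∈ (ε / 3) • B :=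
      auxMemOfGaugeLt hbal (habsB _ (Submodule.sub_mem _ (hvspan _) hxspan))
        (by positivity) hgK
    have hm2 : u (φ (max K N)) - f x ∈ (ε / 3) • (f '' B) := by
      have h := hmemf hm2'
      rwa [map_sub, hvf] at h
    have hsum : u n - f x ∈ (ε / 3 + ε / 3) • (f '' B) := by
      have h := auxAddMem hCconv (by positivity) (by positivity) hm1 hm2
      rwa [show (u n - u (φ (max K N))) + (u (φ (max K N)) - f x) = u n - f x by abel] at h
    have hfinal : gauge (f '' B) (u n - f x) ≤ ε / 3 + ε / 3 :=
      gauge_le_of_mem (by positivity) hsum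
    rw [Real.dist_eq, sub_zero, abs_of_nonneg (gauge_nonneg _)]
    linarith
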